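/- Let γ be a real symmetric L×L matrix with 0 ⪯ γ ⪯ I, let 1 ≤ ℓ < L, let H_frag = span(e₁,…,e_ℓ) with orthogonal projector Π_frag, and let X be the smallest γ-invariant subspace of ℝ^L containing H_frag. Let m be an integer with 1 ≤ m and ℓ + m ≤ L. Then full disentanglement can be achieved — i.e. there exists a real symmetric Π with Π² = Π, Tr(Π) = ℓ + m, Π Π_frag = Π_frag, and Π γ (I_L − Π) = 0 — if and only if m ≥ dim(X) − ℓ. -/

import Mathlib

open Matrix Filter Topology

noncomputable section

/-- The orthogonal projector onto `span(e₁,…,e_ℓ)` in `ℝ^L`. -/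
def fragProj (L ℓ : ℕ) : Matrix (Fin L) (Fin L) ℝ :=
  Matrix.diagonal (fun i : Fin L => if (i : ℕ) < ℓ then (1 : ℝ) else 0)

/-- The fragment subspace `H_frag = span(e₁,…,e_ℓ) ⊆ ℝ^L`. -/
def fragSpace (L ℓ : ℕ) : Submodule ℝ (Fin L → ℝ) :=
  Submodule.span ℝ ((fun i : Fin L => Pi.single i (1 : ℝ)) '' {i : Fin L | (i : ℕ) < ℓ})

lemma mem_fragSpace_iff {L ℓ : ℕ} (x : Fin L → ℝ) :
    x ∈ fragSpace L ℓ ↔ ∀ i : Fin L, ¬ ((i : ℕ) < ℓ) → x i = 0 := by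
  classical
  have hb : (fun i : Fin L => Pi.single i (1 : ℝ)) = ⇑(Pi.basisFun ℝ (Fin L)) := by
    funext i; rw [Pi.basisFun_apply]
  rw [fragSpace, hb, Module.Basis.mem_span_image]
  constructor
  · intro h i hi
    by_contra hx
    exact hi (h (by simp [Finsupp.mem_support_iff, Pi.basisFun_repr, hx]))
  · intro h i hi
    simp only [Finset.mem_coe, Finsupp.mem_support_iff, Pi.basisFun_repr] at hi
    by_contra hc
    exact hi (h i hc)

section Ext

variable {E : Type*} [NormedAddCommGroup E] [InnerProductSpace ℝ E] [FiniteDimensional ℝ E]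

lemma exists_invariant_step (T : E →ₗ[ℝ] E) (hT : T.IsSymmetric) (V : Submodule ℝ E)
    (hV : ∀ x ∈ V, T x ∈ V) (h : Module.finrank ℝ V < Module.finrank ℝ E) :
    ∃ W : Submodule ℝ E, V ≤ W ∧ (∀ x ∈ W, T x ∈ W) ∧
      Module.finrank ℝ W = Module.finrank ℝ V + 1 := by
  have hVo : ∀ x ∈ Vᗮ, T x ∈ Vᗮ := by
    intro x hx
    rw [Submodule.mem_orthogonal]
    intro u hu
    rw [← hT u x]
    exact hx (T u) (hV u hu)
  have hpos : 0 < Module.finrank ℝ ↥Vᗮ := by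
    have := Submodule.finrank_add_finrank_orthogonal (𝕜 := ℝ) V
    omega
  set S := T.restrict hVo with hSdef
  have hS : S.IsSymmetric := hT.restrict_invariant hVo
  set n := Module.finrank ℝ ↥Vᗮ with hn
  set v₀ : ↥Vᗮ := hS.eigenvectorBasis hn.symm ⟨0, hpos⟩ with hv₀
  have hv₀ne : v₀ ≠ 0 := (hS.eigenvectorBasis hn.symm).toBasis.ne_zero ⟨0, hpos⟩
  set μ : ℝ := hS.eigenvalues hn.symm ⟨0, hpos⟩ with hμ
  have hveq : S v₀ = μ • v₀ := by
    have := hS.apply_eigenvectorBasis hn.symm ⟨0, hpos⟩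
    rw [hv₀, hμ]
    exact_mod_cast this
  have hTv : T (v₀ : E) = μ • (v₀ : E) := by
    have : ((S v₀ : ↥Vᗮ) : E) = T (v₀ : E) := rfl
    rw [← this, hveq]
    simp
  have hvne : (v₀ : E) ≠ 0 := by
    simpa [Submodule.coe_eq_zero] using hv₀ne
  refine ⟨V ⊔ Submodule.span ℝ {(v₀ : E)}, le_sup_left, ?_, ?_⟩
  · intro x hx
    rw [Submodule.mem_sup] at hx ⊢
    obtain ⟨y, hy, z, hz, rfl⟩ := hx
    rw [Submodule.mem_span_singleton] at hz
    obtain ⟨c, rfl⟩ := hz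
    refine ⟨T y, hV y hy, (c * μ) • (v₀ : E), ?_, ?_⟩
    · exact Submodule.smul_mem _ _ (Submodule.mem_span_singleton_self _)
    · rw [map_add, LinearMap.map_smul, hTv, smul_smul]
  · have hinf : V ⊓ Submodule.span ℝ {(v₀ : E)} = ⊥ := by
      refine le_antisymm ?_ bot_le
      have h1 : Submodule.span ℝ {(v₀ : E)} ≤ Vᗮ := by
        rw [Submodule.span_le, Set.singleton_subset_iff]
        exact v₀.2
      calc V ⊓ Submodule.span ℝ {(v₀ : E)} ≤ V ⊓ Vᗮ := inf_le_inf_left _ h1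
        _ = ⊥ := (Submodule.orthogonal_disjoint V).eq_bot
    have := Submodule.finrank_sup_add_finrank_inf_eq V (Submodule.span ℝ {(v₀ : E)})
    rw [hinf, finrank_span_singleton hvne] at this
    simpa using this

lemma exists_invariant_ext (T : E →ₗ[ℝ] E) (hT : T.IsSymmetric) :
    ∀ (k : ℕ) (V : Submodule ℝ E), (∀ x ∈ V, T x ∈ V) →
      Module.finrank ℝ V + k ≤ Module.finrank ℝ E →
      ∃ W : Submodule ℝ E, V ≤ W ∧ (∀ x ∈ W, T x ∈ W) ∧
        Module.finrank ℝ W = Module.finrank ℝ V + k := by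
  intro k
  induction k with
  | zero => intro V hV _; exact ⟨V, le_rfl, hV, by simp⟩
  | succ k ih =>
    intro V hV hk
    obtain ⟨W1, hVW1, hW1inv, hW1rank⟩ := exists_invariant_step T hT V hV (by omega)
    obtain ⟨W, hW1W, hWinv, hWrank⟩ := ih W1 hW1inv (by omega)
    exact ⟨W, hVW1.trans hW1W, hWinv, by omega⟩

end Ext

lemma toEuclideanLin_mul {L : ℕ} (A B : Matrix (Fin L) (Fin L) ℝ) :
    Matrix.toEuclideanLin (A * B) = (Matrix.toEuclideanLin A) ∘ₗ (Matrix.toEuclideanLin B) := by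
  rw [Matrix.toEuclideanLin_eq_toLin]
  exact Matrix.toLin_mul _ _ _ A B

lemma toEuclideanLin_one {L : ℕ} :
    Matrix.toEuclideanLin (1 : Matrix (Fin L) (Fin L) ℝ) = LinearMap.id := by
  rw [Matrix.toEuclideanLin_eq_toLin, Matrix.toLin_one]

theorem stmt_15 {L ℓ m : ℕ} (hℓ1 : 1 ≤ ℓ) (hℓL : ℓ < L) (hm1 : 1 ≤ m) (hLm : ℓ + m ≤ L)
    (γ : Matrix (Fin L) (Fin L) ℝ) (hγs : γ.IsSymm)
    (hγpsd : γ.PosSemidef) (hγle : ((1 : Matrix (Fin L) (Fin L) ℝ) - γ).PosSemidef)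
    (X : Submodule ℝ (Fin L → ℝ))
    (hXfrag : fragSpace L ℓ ≤ X) (hXinv : Submodule.map γ.mulVecLin X ≤ X)
    (hXmin : ∀ W : Submodule ℝ (Fin L → ℝ),
      fragSpace L ℓ ≤ W → Submodule.map γ.mulVecLin W ≤ W → X ≤ W) :
    (∃ Pr : Matrix (Fin L) (Fin L) ℝ,
        Pr.IsSymm ∧ Pr * Pr = Pr ∧ Pr.trace = ((ℓ + m : ℕ) : ℝ) ∧
        Pr * fragProj L ℓ = fragProj L ℓ ∧ Pr * γ * (1 - Pr) = 0) ↔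
      Module.finrank ℝ ↥X - ℓ ≤ m := by
  classical
  constructor
  · -- forward direction
    rintro ⟨Pr, hs, hidem, htr, hfrag, hdis⟩
    set W : Submodule ℝ (Fin L → ℝ) := LinearMap.range Pr.mulVecLin with hW
    -- Pr commutes with γ
    have h1 : Pr * γ = Pr * γ * Pr := by
      have := hdis
      rw [mul_sub, mul_one, sub_eq_zero] at this
      exact this
    have h2 : γ * Pr = Pr * γ := by
      have ht : (Pr * γ * Pr)ᵀ = Pr * γ * Pr := by
        rw [Matrix.transpose_mul, Matrix.transpose_mul, hs.eq, hγs.eq, mul_assoc]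
      calc γ * Pr = (Pr * γ)ᵀ := by rw [Matrix.transpose_mul, hs.eq, hγs.eq]
        _ = (Pr * γ * Pr)ᵀ := by rw [← h1]
        _ = Pr * γ * Pr := ht
        _ = Pr * γ := h1.symm
    have hWfrag : fragSpace L ℓ ≤ W := by
      rw [fragSpace, Submodule.span_le]
      rintro _ ⟨i, hi, rfl⟩
      have hv : fragProj L ℓ *ᵥ Pi.single i (1 : ℝ) = Pi.single i 1 := by
        rw [fragProj, Matrix.diagonal_mulVec_single]
        simp [Set.mem_setOf_eq.mp hi]
      have : Pr *ᵥ Pi.single i (1 : ℝ) = Pi.single i 1 := by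
        conv_lhs => rw [← hv, Matrix.mulVec_mulVec, hfrag, hv]
      exact ⟨Pi.single i 1, by rw [Matrix.mulVecLin_apply, this]⟩
    have hWinv : Submodule.map γ.mulVecLin W ≤ W := by
      rintro _ ⟨_, ⟨v, rfl⟩, rfl⟩
      refine ⟨γ *ᵥ v, ?_⟩
      simp only [Matrix.mulVecLin_apply]
      rw [Matrix.mulVec_mulVec, Matrix.mulVec_mulVec, h2]
    have hXW : X ≤ W := hXmin W hWfrag hWinv
    -- trace of projection
    have hproj : LinearMap.IsProj W Pr.mulVecLin := by
      refine ⟨fun x => ⟨x, rfl⟩, ?_⟩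
      rintro _ ⟨v, rfl⟩
      simp only [Matrix.mulVecLin_apply]
      rw [Matrix.mulVec_mulVec, hidem]
    have htr2 : LinearMap.trace ℝ (Fin L → ℝ) Pr.mulVecLin = (Module.finrank ℝ W : ℝ) :=
      hproj.trace
    have htr3 : LinearMap.trace ℝ (Fin L → ℝ) Pr.mulVecLin = Pr.trace := by
      rw [LinearMap.trace_eq_matrix_trace ℝ (Pi.basisFun ℝ (Fin L))]
      congr 1
      rw [← Matrix.toLin'_apply' Pr]
      rw [LinearMap.toMatrix_eq_toMatrix']
      exact LinearMap.toMatrix'_toLin' Pr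
    have hfr : Module.finrank ℝ W = ℓ + m := by
      have : (Module.finrank ℝ W : ℝ) = ((ℓ + m : ℕ) : ℝ) := by
        rw [← htr2, htr3, htr]
      exact_mod_cast this
    have := Submodule.finrank_mono hXW
    omega
  · -- backward direction
    intro hdim
    set E := EuclideanSpace ℝ (Fin L)
    set eqv : E ≃ₗ[ℝ] (Fin L → ℝ) := WithLp.linearEquiv 2 ℝ (Fin L → ℝ) with heqv
    set G : E →ₗ[ℝ] E := Matrix.toEuclideanLin γ with hG
    have hGsym : G.IsSymmetric := Matrix.isHermitian_iff_isSymmetric.mp hγpsd.isHermitian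
    set X' : Submodule ℝ E := X.comap eqv.toLinearMap with hX'
    have hX'inv : ∀ x ∈ X', G x ∈ X' := by
      intro x hx
      have : eqv (G x) = γ *ᵥ (eqv x) := rfl
      simp only [hX', Submodule.mem_comap] at hx ⊢
      rw [LinearEquiv.coe_coe, this]
      exact hXinv ⟨eqv x, hx, rfl⟩
    have hX'rank : Module.finrank ℝ X' = Module.finrank ℝ X := by
      rw [hX', Submodule.comap_equiv_eq_map_symm]
      exact LinearEquiv.finrank_map_eq _ _
    have hX'le : Module.finrank ℝ X' + ((ℓ + m) - Module.finrank ℝ X') = ℓ + m := by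
      have : Module.finrank ℝ X ≤ ℓ + m := by omega
      omega
    obtain ⟨W, hXW, hWinv, hWrank⟩ := exists_invariant_ext G hGsym
      ((ℓ + m) - Module.finrank ℝ X') X' hX'inv
      (by rw [hX'le, show Module.finrank ℝ E = L from finrank_euclideanSpace_fin]; exact hLm)
    rw [hX'le] at hWrank
    -- the projection
    set Q : E →L[ℝ] E := W.subtypeL.comp (W.orthogonalProjectionOnto) with hQ
    have hQsym : (Q : E →ₗ[ℝ] E).IsSymmetric :=
      ContinuousLinearMap.isSelfAdjoint_iff_isSymmetric.mp (isSelfAdjoint_starProjection W)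
    have hQmem : ∀ x : E, Q x ∈ W := fun x => (W.orthogonalProjectionOnto x).2
    have hQfix : ∀ x ∈ W, Q x = x := by
      intro x hx
      have := Submodule.orthogonalProjectionOnto_mem_subspace_eq_self (K := W) ⟨x, hx⟩
      simp only [hQ, ContinuousLinearMap.comp_apply, Submodule.subtypeL_apply]
      rw [this]
    set Pr : Matrix (Fin L) (Fin L) ℝ := Matrix.toEuclideanLin.symm (Q : E →ₗ[ℝ] E) with hPr
    have hPrlin : Matrix.toEuclideanLin Pr = (Q : E →ₗ[ℝ] E) :=
      Matrix.toEuclideanLin.apply_symm_apply _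
    refine ⟨Pr, ?_, ?_, ?_, ?_, ?_⟩
    · -- symmetric
      have : Pr.IsHermitian := Matrix.isHermitian_iff_isSymmetric.mpr (by rw [hPrlin]; exact hQsym)
      rwa [Matrix.IsHermitian, Matrix.conjTranspose_eq_transpose_of_trivial] at this
    · -- idempotent
      apply Matrix.toEuclideanLin.injective
      rw [toEuclideanLin_mul, hPrlin]
      refine LinearMap.ext fun x => ?_
      simp only [LinearMap.comp_apply, ContinuousLinearMap.coe_coe]
      exact hQfix _ (hQmem x)
    · -- trace
      have hproj : LinearMap.IsProj W (Q : E →ₗ[ℝ] E) := ⟨hQmem, hQfix⟩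
      have htr2 : LinearMap.trace ℝ E (Q : E →ₗ[ℝ] E) = (Module.finrank ℝ W : ℝ) := hproj.trace
      have htr3 : LinearMap.trace ℝ E (Q : E →ₗ[ℝ] E) = Pr.trace := by
        rw [LinearMap.trace_eq_matrix_trace ℝ (PiLp.basisFun 2 ℝ (Fin L))]
        congr 1
      rw [← htr3, htr2, hWrank]
    · -- Pr * fragProj = fragProj
      apply Matrix.toEuclideanLin.injective
      rw [toEuclideanLin_mul, hPrlin]
      refine LinearMap.ext fun x => ?_
      have hmem : Matrix.toEuclideanLin (fragProj L ℓ) x ∈ W := by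
        apply hXW
        simp only [hX', Submodule.mem_comap]
        apply hXfrag
        rw [mem_fragSpace_iff]
        intro i hi
        show (fragProj L ℓ *ᵥ (eqv x)) i = 0
        rw [fragProj, Matrix.mulVec_diagonal]
        simp [hi]
      simp only [LinearMap.comp_apply, ContinuousLinearMap.coe_coe]
      exact hQfix _ hmem
    · -- disentanglement
      apply Matrix.toEuclideanLin.injective
      rw [toEuclideanLin_mul, toEuclideanLin_mul, map_sub, toEuclideanLin_one, hPrlin, map_zero]
      refine LinearMap.ext fun x => ?_
      have h1 : x - Q x ∈ Wᗮ := W.sub_starProjection_mem_orthogonal x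
      have h2 : G (x - Q x) ∈ Wᗮ := by
        rw [Submodule.mem_orthogonal]
        intro u hu
        rw [← hGsym u (x - Q x)]
        exact h1 (G u) (hWinv u hu)
      have h3 : W.orthogonalProjectionOnto (G (x - Q x)) = 0 :=
        Submodule.orthogonalProjectionOnto_apply_of_mem_orthogonal h2
      show (↑(W.orthogonalProjectionOnto (G (x - Q x)) : ↥W) : E) = 0
      rw [h3, Submodule.coe_zero]
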